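/- For n ≥ 1 define, for a = (a₁,…,aₙ) ∈ ℂⁿ, the (n+2)×(n+2) complex matrix ρ(a) whose entries are: ρ(a)₍₀,₀₎ = 1, ρ(a)₍ᵢ,₀₎ = aᵢ and ρ(a)₍ᵢ,ᵢ₎ = 1 for 1 ≤ i ≤ n, ρ(a)₍ₙ₊₁,₀₎ = (1/2)·Σᵢ aᵢ², ρ(a)₍ₙ₊₁,ᵢ₎ = aᵢ for 1 ≤ i ≤ n, ρ(a)₍ₙ₊₁,ₙ₊₁₎ = 1, and all other entries 0. Then ρ(a+b) = ρ(a)·ρ(b) for all a, b ∈ ℂⁿ, ρ is injective, and every ρ(a) preserves the quadratic form q(y) = 2·y₀·yₙ₊₁ − Σᵢ₌₁ⁿ yᵢ² on ℂ^{n+2}, i.e. q(ρ(a)·y) = q(y) for all y ∈ ℂ^{n+2}. -/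

import Mathlib

/-- Auxiliary: for `i : Fin (n+2)` with `1 ≤ i ≤ n`, the value `aᵢ`; otherwise `0`. -/
noncomputable def av (n : ℕ) (a : Fin n → ℂ) (i : Fin (n + 2)) : ℂ :=
  if h : 1 ≤ (i : ℕ) ∧ (i : ℕ) ≤ n then a ⟨(i : ℕ) - 1, by omega⟩ else 0

/-- The matrix `ρ(a)`: `ρ(a)₍₀,₀₎ = 1`, `ρ(a)₍ᵢ,₀₎ = aᵢ` and `ρ(a)₍ᵢ,ᵢ₎ = 1` for
`1 ≤ i ≤ n`, `ρ(a)₍ₙ₊₁,₀₎ = ½·Σ aᵢ²`, `ρ(a)₍ₙ₊₁,ᵢ₎ = aᵢ` for `1 ≤ i ≤ n`,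
`ρ(a)₍ₙ₊₁,ₙ₊₁₎ = 1`, all other entries `0`. -/
noncomputable def rho (n : ℕ) (a : Fin n → ℂ) : Matrix (Fin (n + 2)) (Fin (n + 2)) ℂ :=
  Matrix.of fun i j =>
    if i = j then 1
    else if (j : ℕ) = 0 ∧ (i : ℕ) ≠ 0 ∧ (i : ℕ) ≠ n + 1 then av n a i
    else if (j : ℕ) = 0 ∧ (i : ℕ) = n + 1 then (1 / 2) * ∑ k, a k ^ 2
    else if (i : ℕ) = n + 1 ∧ (j : ℕ) ≠ 0 ∧ (j : ℕ) ≠ n + 1 then av n a j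
    else 0

/-- The quadratic form `q(y) = 2·y₀·yₙ₊₁ − Σᵢ₌₁ⁿ yᵢ²` on `ℂ^{n+2}`. -/
noncomputable def quadForm (n : ℕ) (y : Fin (n + 2) → ℂ) : ℂ :=
  2 * y 0 * y (Fin.last (n + 1)) - ∑ i : Fin n, y i.succ.castSucc ^ 2

lemma rho_apply (n : ℕ) (a : Fin n → ℂ) (i j : Fin (n + 2)) :
    rho n a i j =
    if i = j then 1
    else if (j : ℕ) = 0 ∧ (i : ℕ) ≠ 0 ∧ (i : ℕ) ≠ n + 1 then av n a i
    else if (j : ℕ) = 0 ∧ (i : ℕ) = n + 1 then (1 / 2) * ∑ k, a k ^ 2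
    else if (i : ℕ) = n + 1 ∧ (j : ℕ) ≠ 0 ∧ (j : ℕ) ≠ n + 1 then av n a j
    else 0 := rfl

lemma av_mid (n : ℕ) (a : Fin n → ℂ) (k : Fin n) : av n a k.succ.castSucc = a k := by
  have hk : ((k.succ.castSucc : Fin (n+2)) : ℕ) = (k : ℕ) + 1 := by simp
  have hkn : (k : ℕ) < n := k.isLt
  rw [av, dif_pos (by omega)]
  congr 1

lemma sum_split (n : ℕ) (f : Fin (n + 2) → ℂ) :
    ∑ j, f j = f 0 + (∑ k : Fin n, f k.succ.castSucc) + f (Fin.last (n + 1)) := by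
  rw [Fin.sum_univ_succ, Fin.sum_univ_castSucc]
  simp [-Fin.castSucc_succ, Fin.succ_castSucc, add_assoc, Fin.succ_last]

lemma mulVec_zero' (n : ℕ) (a : Fin n → ℂ) (y : Fin (n + 2) → ℂ) :
    (rho n a).mulVec y 0 = y 0 := by
  rw [Matrix.mulVec, dotProduct, sum_split n]
  have h1 : ∀ k : Fin n, rho n a 0 k.succ.castSucc = 0 := by
    intro k
    have hk : ((k.succ.castSucc : Fin (n+2)) : ℕ) = (k : ℕ) + 1 := by simp
    rw [rho_apply, if_neg (by simp [Fin.ext_iff, hk]), if_neg (by simp [hk]),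
      if_neg (by simp), if_neg (by simp)]
  have h2 : rho n a 0 (Fin.last (n+1)) = 0 := by
    rw [rho_apply, if_neg (by simp [Fin.ext_iff]), if_neg (by simp),
      if_neg (by simp), if_neg (by simp)]
  have h0 : rho n a 0 0 = 1 := by rw [rho_apply, if_pos rfl]
  simp [-Fin.castSucc_succ, h0, h1, h2]

lemma mulVec_mid (n : ℕ) (a : Fin n → ℂ) (y : Fin (n + 2) → ℂ) (k : Fin n) :
    (rho n a).mulVec y k.succ.castSucc = a k * y 0 + y k.succ.castSucc := by
  rw [Matrix.mulVec, dotProduct, sum_split n]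
  have hk : ((k.succ.castSucc : Fin (n+2)) : ℕ) = (k : ℕ) + 1 := by simp
  have hkn : (k : ℕ) < n := k.isLt
  have h0 : rho n a k.succ.castSucc 0 = a k := by
    rw [rho_apply, if_neg (by simp [Fin.ext_iff, hk]),
      if_pos (by simp [hk]; omega), av_mid]
  have h1 : ∀ m : Fin n, rho n a k.succ.castSucc m.succ.castSucc
      = if k = m then 1 else 0 := by
    intro m
    have hm : ((m.succ.castSucc : Fin (n+2)) : ℕ) = (m : ℕ) + 1 := by simp
    by_cases h : k = m
    · subst h; rw [rho_apply, if_pos rfl, if_pos rfl]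
    · rw [rho_apply, if_neg (fun hh => h (Fin.ext (by
        have := congrArg Fin.val hh; rw [hk, hm] at this; omega))),
        if_neg (by simp [hm]), if_neg (by simp [hm]),
        if_neg (by simp [hk]; omega), if_neg h]
  have h2 : rho n a k.succ.castSucc (Fin.last (n+1)) = 0 := by
    rw [rho_apply, if_neg (Fin.castSucc_lt_last k.succ).ne,
      if_neg (by simp), if_neg (by simp), if_neg (by simp)]
  rw [h0, h2]
  simp only [h1]
  simp [mul_comm]

lemma mulVec_last (n : ℕ) (a : Fin n → ℂ) (y : Fin (n + 2) → ℂ) :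
    (rho n a).mulVec y (Fin.last (n + 1)) =
      ((1 / 2) * ∑ k, a k ^ 2) * y 0 + (∑ k : Fin n, a k * y k.succ.castSucc)
        + y (Fin.last (n + 1)) := by
  rw [Matrix.mulVec, dotProduct, sum_split n]
  have h0 : rho n a (Fin.last (n+1)) 0 = (1 / 2) * ∑ k, a k ^ 2 := by
    rw [rho_apply, if_neg (by simp [Fin.ext_iff]), if_neg (by simp),
      if_pos (by simp)]
  have h1 : ∀ m : Fin n, rho n a (Fin.last (n+1)) m.succ.castSucc = a m := by
    intro m
    have hm : ((m.succ.castSucc : Fin (n+2)) : ℕ) = (m : ℕ) + 1 := by simp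
    have hmn : (m : ℕ) < n := m.isLt
    rw [rho_apply, if_neg (by simp [Fin.ext_iff, hm]; omega),
      if_neg (by simp [hm]), if_neg (by simp [hm]),
      if_pos (by simp [hm]; omega), av_mid]
  have h2 : rho n a (Fin.last (n+1)) (Fin.last (n+1)) = 1 := by
    rw [rho_apply, if_pos rfl]
  rw [h0, h2]
  simp only [h1]
  ring

lemma rho_mid_zero (n : ℕ) (a : Fin n → ℂ) (k : Fin n) :
    rho n a k.succ.castSucc 0 = a k := by
  have hk : ((k.succ.castSucc : Fin (n+2)) : ℕ) = (k : ℕ) + 1 := by simp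
  have hkn : (k : ℕ) < n := k.isLt
  rw [rho_apply, if_neg (by simp [Fin.ext_iff, hk]),
    if_pos (by simp [hk]; omega), av_mid]

lemma fin_cases3 (n : ℕ) (i : Fin (n + 2)) :
    i = 0 ∨ (∃ k : Fin n, i = k.succ.castSucc) ∨ i = Fin.last (n + 1) := by
  rcases Fin.eq_castSucc_or_eq_last i with ⟨j, rfl⟩ | rfl
  · rcases Fin.eq_zero_or_eq_succ j with rfl | ⟨k, rfl⟩
    · exact Or.inl rfl
    · exact Or.inr (Or.inl ⟨k, rfl⟩)
  · exact Or.inr (Or.inr rfl)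


/-- `ρ` is an injective homomorphism from `(ℂⁿ, +)` into the orthogonal group of the
quadratic form `q(y) = 2·y₀·yₙ₊₁ − Σ yᵢ²`. -/
theorem stmt15 (n : ℕ) (hn : 1 ≤ n) :
    (∀ a b : Fin n → ℂ, rho n (a + b) = rho n a * rho n b) ∧
    Function.Injective (rho n) ∧
    (∀ (a : Fin n → ℂ) (y : Fin (n + 2) → ℂ),
      quadForm n ((rho n a).mulVec y) = quadForm n y) := by
  refine ⟨?_, ?_, ?_⟩
  · intro a b
    have key : ∀ y, (rho n (a + b)).mulVec y = (rho n a * rho n b).mulVec y := by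
      intro y
      rw [← Matrix.mulVec_mulVec]
      funext i
      rcases fin_cases3 n i with rfl | ⟨k, rfl⟩ | rfl
      · rw [mulVec_zero', mulVec_zero', mulVec_zero']
      · rw [mulVec_mid, mulVec_mid, mulVec_mid, mulVec_zero']
        simp only [Pi.add_apply]
        ring
      · rw [mulVec_last, mulVec_last, mulVec_last, mulVec_zero']
        simp only [mulVec_mid, Pi.add_apply]
        have e1 : ∑ k, (a k + b k) ^ 2
            = (∑ k, a k ^ 2) + 2 * (∑ k, a k * b k) + ∑ k, b k ^ 2 := by
          calc ∑ k, (a k + b k) ^ 2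
              = ∑ k, (a k ^ 2 + 2 * (a k * b k) + b k ^ 2) :=
                Finset.sum_congr rfl fun k _ => by ring
            _ = _ := by
                rw [Finset.sum_add_distrib, Finset.sum_add_distrib, ← Finset.mul_sum]
        have e2 : ∑ k : Fin n, (a k + b k) * y k.succ.castSucc
            = (∑ k, a k * y k.succ.castSucc) + ∑ k, b k * y k.succ.castSucc := by
          rw [← Finset.sum_add_distrib]
          exact Finset.sum_congr rfl fun k _ => by ring
        have e3 : ∑ k : Fin n, a k * (b k * y 0 + y k.succ.castSucc)
            = (∑ k, a k * b k) * y 0 + ∑ k, a k * y k.succ.castSucc := by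
          calc ∑ k : Fin n, a k * (b k * y 0 + y k.succ.castSucc)
              = ∑ k, (a k * b k * y 0 + a k * y k.succ.castSucc) :=
                Finset.sum_congr rfl fun k _ => by ring
            _ = _ := by rw [Finset.sum_add_distrib, ← Finset.sum_mul]
        rw [e1, e2, e3]
        ring
    ext i j
    have h := congrFun (key (Pi.single j 1)) i
    simpa [Matrix.mulVec_single] using h
  · intro a b hab
    funext k
    have h := congrFun (congrFun hab k.succ.castSucc) 0
    rwa [rho_mid_zero, rho_mid_zero] at h
  · intro a y
    rw [quadForm, quadForm, mulVec_zero', mulVec_last]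
    simp only [mulVec_mid]
    have e : ∑ k : Fin n, (a k * y 0 + y k.succ.castSucc) ^ 2
        = (∑ k : Fin n, a k ^ 2) * y 0 ^ 2
          + 2 * (∑ k : Fin n, a k * y k.succ.castSucc) * y 0
          + ∑ k : Fin n, y k.succ.castSucc ^ 2 := by
      calc ∑ k : Fin n, (a k * y 0 + y k.succ.castSucc) ^ 2
          = ∑ k : Fin n, (a k ^ 2 * y 0 ^ 2 + 2 * (a k * y k.succ.castSucc) * y 0
              + y k.succ.castSucc ^ 2) := Finset.sum_congr rfl fun k _ => by ring
        _ = _ := by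
            rw [Finset.sum_add_distrib, Finset.sum_add_distrib, ← Finset.sum_mul,
              ← Finset.sum_mul, ← Finset.mul_sum]
    rw [e]
    ring
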